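/- arXiv:2106.11307 — 2 statements merged into one kernel-verified Lean document; each statement's English description precedes it below -/
import Mathlib

section
/- Let A = ℚ[t,t₂]/(t⁷−1, t₂⁷−1, Σ_{j=1}^{7} t^j t₂^{7−j}). Then t − t₂ is a unit in A, with inverse −(1/7) · Σ_{i=1}^{7} i · t^{7−i} t₂^{i−1}. -/
noncomputable section
open MvPolynomial Finset

/-- The ring `A = ℚ[t,t₂]/(t⁷−1, t₂⁷−1, Σ_{j=1}^{7} t^j t₂^{7−j})`. -/
abbrev A : Type :=
  MvPolynomial (Fin 2) ℚ ⧸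
    Ideal.span ({X 0 ^ 7 - 1, X 1 ^ 7 - 1,
      ∑ j ∈ range 7, X 0 ^ (j + 1) * X 1 ^ (6 - j)} : Set (MvPolynomial (Fin 2) ℚ))

theorem keylemma :
    ((X 0 : MvPolynomial (Fin 2) ℚ) - X 1) *
        (-(7⁻¹ : ℚ) • ∑ i ∈ range 7, ((i : MvPolynomial (Fin 2) ℚ) + 1) * X 0 ^ (6 - i) * X 1 ^ i)
      - 1
    = ((X 1 : MvPolynomial (Fin 2) ℚ) ^ 7 - 1)
      - (7⁻¹ : ℚ) • (∑ j ∈ range 7, (X 0 : MvPolynomial (Fin 2) ℚ) ^ (j + 1) * X 1 ^ (6 - j)) := by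
  have h7 : (C (7⁻¹ : ℚ) : MvPolynomial (Fin 2) ℚ) * 7 = 1 := by
    rw [show ((7 : MvPolynomial (Fin 2) ℚ)) = C 7 from (map_ofNat C 7).symm, ← C_mul]
    norm_num
  simp only [neg_smul, MvPolynomial.smul_eq_C_mul, Finset.sum_range_succ, Finset.sum_range_zero]
  push_cast
  linear_combination ((X 1 : MvPolynomial (Fin 2) ℚ)) ^ 7 * h7

def t : A := Ideal.Quotient.mk _ (X 0)
def t₂ : A := Ideal.Quotient.mk _ (X 1)

theorem stmt2 :
    IsUnit (t - t₂) ∧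
      (t - t₂) * (-(7⁻¹ : ℚ) • ∑ i ∈ range 7, ((i : A) + 1) * t ^ (6 - i) * t₂ ^ i) = 1 := by
  set I := Ideal.span ({X 0 ^ 7 - 1, X 1 ^ 7 - 1,
      ∑ j ∈ range 7, X 0 ^ (j + 1) * X 1 ^ (6 - j)} : Set (MvPolynomial (Fin 2) ℚ)) with hI
  have key : (t - t₂) * (-(7⁻¹ : ℚ) • ∑ i ∈ range 7, ((i : A) + 1) * t ^ (6 - i) * t₂ ^ i) = 1 := by
    have ht : t = Ideal.Quotient.mkₐ ℚ I (X 0) := rfl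
    have ht₂ : t₂ = Ideal.Quotient.mkₐ ℚ I (X 1) := rfl
    have hsum : (∑ i ∈ range 7, ((i : A) + 1) * t ^ (6 - i) * t₂ ^ i)
        = Ideal.Quotient.mkₐ ℚ I
          (∑ i ∈ range 7, ((i : MvPolynomial (Fin 2) ℚ) + 1) * X 0 ^ (6 - i) * X 1 ^ i) := by
      rw [map_sum]
      refine Finset.sum_congr rfl fun i _ => ?_
      rw [map_mul, map_mul, map_pow, map_pow, map_add, map_natCast, map_one]
      rfl
    rw [hsum, ht, ht₂, ← map_sub, ← map_smul, ← map_mul,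
      show (1 : A) = Ideal.Quotient.mkₐ ℚ I 1 from (map_one _).symm,
      Ideal.Quotient.mkₐ_eq_mk, Ideal.Quotient.eq]
    rw [keylemma, MvPolynomial.smul_eq_C_mul]
    refine sub_mem (Ideal.subset_span ?_) (Ideal.mul_mem_left _ _ (Ideal.subset_span ?_))
    · right; left; rfl
    · right; right; rfl
  exact ⟨IsUnit.of_mul_eq_one _ key, key⟩
end
end

section
/- Let A = ℚ[t,t₂]/(t⁷−1, t₂⁷−1, Σ_{j=1}^{7} t^j t₂^{7−j}). For any integer l with gcd(l,7) = 1, the element t^l − t₂^l is a unit in A. -/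
noncomputable section
open MvPolynomial Finset

lemma t_pow7 : t ^ 7 = 1 := by
  have h : (X 0 ^ 7 - 1 : MvPolynomial (Fin 2) ℚ) ∈
      Ideal.span ({X 0 ^ 7 - 1, X 1 ^ 7 - 1,
        ∑ j ∈ range 7, X 0 ^ (j + 1) * X 1 ^ (6 - j)} : Set (MvPolynomial (Fin 2) ℚ)) :=
    Ideal.subset_span (by simp)
  have h2 := Ideal.Quotient.eq_zero_iff_mem.mpr h
  have h3 : t ^ 7 - 1 = 0 := by simpa [t] using h2
  linear_combination h3

lemma t₂_pow7 : t₂ ^ 7 = 1 := by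
  have h : (X 1 ^ 7 - 1 : MvPolynomial (Fin 2) ℚ) ∈
      Ideal.span ({X 0 ^ 7 - 1, X 1 ^ 7 - 1,
        ∑ j ∈ range 7, X 0 ^ (j + 1) * X 1 ^ (6 - j)} : Set (MvPolynomial (Fin 2) ℚ)) :=
    Ideal.subset_span (by simp)
  have h2 := Ideal.Quotient.eq_zero_iff_mem.mpr h
  have h3 : t₂ ^ 7 - 1 = 0 := by simpa [t₂] using h2
  linear_combination h3

lemma sum_rel : ∑ j ∈ range 7, t ^ (j + 1) * t₂ ^ (6 - j) = 0 := by
  have h : (∑ j ∈ range 7, X 0 ^ (j + 1) * X 1 ^ (6 - j) : MvPolynomial (Fin 2) ℚ) ∈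
      Ideal.span ({X 0 ^ 7 - 1, X 1 ^ 7 - 1,
        ∑ j ∈ range 7, X 0 ^ (j + 1) * X 1 ^ (6 - j)} : Set (MvPolynomial (Fin 2) ℚ)) :=
    Ideal.subset_span (by simp)
  have h2 := Ideal.Quotient.eq_zero_iff_mem.mpr h
  simpa [t, t₂, map_sum] using h2

lemma sum_rel' : ∑ j ∈ range 7, t ^ j * t₂ ^ (6 - j) = 0 := by
  have h : t ^ 6 * ∑ j ∈ range 7, t ^ (j + 1) * t₂ ^ (6 - j)
      = ∑ j ∈ range 7, t ^ 7 * (t ^ j * t₂ ^ (6 - j)) := by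
    rw [Finset.mul_sum]
    refine Finset.sum_congr rfl fun j _ => ?_
    ring
  rw [sum_rel, mul_zero] at h
  have := h.symm
  rw [t_pow7] at this
  simpa using this

lemma isUnit_t₂ : IsUnit t₂ := by
  refine IsUnit.of_mul_eq_one (a := t₂) (t₂ ^ 6) ?_
  rw [← pow_succ']; exact t₂_pow7

lemma isUnit_sub : IsUnit (t - t₂) := by
  have key : ∑ j ∈ range 7, (t ^ j - t₂ ^ j) * t₂ ^ (6 - j) = -7 * t₂ ^ 6 := by
    have : ∑ j ∈ range 7, (t ^ j - t₂ ^ j) * t₂ ^ (6 - j)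
        = (∑ j ∈ range 7, t ^ j * t₂ ^ (6 - j)) - ∑ j ∈ range 7, t₂ ^ j * t₂ ^ (6 - j) := by
      rw [← Finset.sum_sub_distrib]
      refine Finset.sum_congr rfl fun j _ => by ring
    rw [this, sum_rel']
    have h6 : ∀ j ∈ range 7, t₂ ^ j * t₂ ^ (6 - j) = t₂ ^ 6 := by
      intro j hj
      rw [← pow_add]
      congr 1
      have := Finset.mem_range.mp hj
      omega
    rw [Finset.sum_congr rfl h6, Finset.sum_const, Finset.card_range]
    simp [nsmul_eq_mul]
    ring
  have hdvd : (t - t₂) ∣ (-7 * t₂ ^ 6 : A) := by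
    rw [← key]
    refine Finset.dvd_sum fun j _ => ?_
    exact Dvd.dvd.mul_right (sub_dvd_pow_sub_pow t t₂ j) _
  have hunit : IsUnit (-7 * t₂ ^ 6 : A) := by
    refine IsUnit.mul ?_ (isUnit_t₂.pow 6)
    have h7 : (algebraMap ℚ A) (-7) = (-7 : A) := by
      rw [map_neg, map_ofNat]
    rw [← h7]
    exact (IsUnit.map (algebraMap ℚ A) (by norm_num : IsUnit (-7 : ℚ)))
  exact isUnit_of_dvd_unit hdvd hunit

/-- For `l` coprime to `7`, the element `t^l − t₂^l` is a unit in `A`. -/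
theorem stmt4 (l : ℤ) (hl : Int.gcd l 7 = 1) :
    IsUnit (t ^ ((l : ZMod 7)).val - t₂ ^ ((l : ZMod 7)).val) := by
  set u : ZMod 7 := (l : ZMod 7) with hu
  have hu0 : u ≠ 0 := by
    intro h
    rw [hu, ZMod.intCast_zmod_eq_zero_iff_dvd] at h
    have h' : (7:ℕ) ∣ l.natAbs := by
      have := Int.natAbs_dvd_natAbs.mpr h
      simpa using this
    have h2 := Nat.dvd_gcd h' (dvd_refl 7)
    rw [show Int.gcd l 7 = Nat.gcd l.natAbs 7 from rfl] at hl
    rw [hl] at h2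
    omega
  set k := u.val with hk
  set m := u⁻¹.val with hm
  haveI : Fact (Nat.Prime 7) := ⟨by norm_num⟩
  have hiu : IsUnit u := isUnit_iff_ne_zero.mpr hu0
  have h1 : u * u⁻¹ = 1 := ZMod.mul_inv_of_unit u hiu
  have hmod : (k * m) % 7 = 1 := by
    have h2 : ((k * m : ℕ) : ZMod 7) = 1 := by
      push_cast
      rw [hk, hm, ZMod.natCast_val, ZMod.natCast_val, ZMod.cast_id, ZMod.cast_id]
      exact h1
    calc (k * m) % 7 = ((k * m : ℕ) : ZMod 7).val := (ZMod.val_natCast _ _).symm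
      _ = 1 := by rw [h2]; rfl
  have hpow : ∀ n : ℕ, n % 7 = 1 → ∀ x : A, x ^ 7 = 1 → x ^ n = x := by
    intro n hn x hx
    have : n = 7 * (n / 7) + 1 := by omega
    rw [this, pow_add, pow_mul, hx, one_pow, one_mul, pow_one]
  have hdvd : (t ^ k - t₂ ^ k) ∣ (t - t₂) := by
    have := sub_dvd_pow_sub_pow (t ^ k) (t₂ ^ k) m
    rwa [← pow_mul, ← pow_mul, hpow (k * m) hmod t t_pow7, hpow (k * m) hmod t₂ t₂_pow7] at this
  exact isUnit_of_dvd_unit hdvd isUnit_sub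
end
end
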